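/- Let Δ ≥ 3 be an integer and let λ < 0. Suppose that there exist finite bipartite simple graphs G₋ and G₊ of maximum degree at most Δ with vertices v₋ of degree 1 in G₋ and v₊ of degree 1 in G₊ such that Z^{out}_{G₋,v₋}(λ) ≠ 0, Z^{in}_{G₋,v₋}(λ)/Z^{out}_{G₋,v₋}(λ) = -1, Z^{out}_{G₊,v₊}(λ) ≠ 0, and Z^{in}_{G₊,v₊}(λ)/Z^{out}_{G₊,v₊}(λ) = +1. Then for every z ∈ S there exists a finite bipartite simple graph G of maximum degree at most Δ and a vertex v of G of degree 1 such that Z^{out}_{G,v}(λ) ≠ 0 and Z^{in}_{G,v}(λ)/Z^{out}_{G,v}(λ) = λz. -/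

import Mathlib

open scoped Classical

/-- The set of independent sets of a finite simple graph `G`, as a `Finset` of `Finset`s
(including the empty set). -/
noncomputable def indepFinsets {V : Type*} [Fintype V] (G : SimpleGraph V) : Finset (Finset V) :=
  Finset.univ.filter fun I => ∀ u ∈ I, ∀ w ∈ I, ¬ G.Adj u w

/-- The hard-core partition function `Z_G(λ) = ∑_{I ∈ I_G} λ^{|I|}`. -/
noncomputable def hcZ {V : Type*} [Fintype V] (G : SimpleGraph V) (lam : ℝ) : ℝ :=
  ∑ I ∈ indepFinsets G, lam ^ I.card

/-- `Z^{in}_{G,v}(λ)`: contribution of independent sets containing `v`. -/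
noncomputable def hcZin {V : Type*} [Fintype V] (G : SimpleGraph V) (v : V) (lam : ℝ) : ℝ :=
  ∑ I ∈ (indepFinsets G).filter (fun I => v ∈ I), lam ^ I.card

/-- `Z^{out}_{G,v}(λ)`: contribution of independent sets not containing `v`. -/
noncomputable def hcZout {V : Type*} [Fintype V] (G : SimpleGraph V) (v : V) (lam : ℝ) : ℝ :=
  ∑ I ∈ (indepFinsets G).filter (fun I => v ∉ I), lam ^ I.card

/-- The set `S ⊆ ℝ`: `z ∈ S` iff there is a finite sequence starting at `0`, ending at
`z`, each step applying `f₊(x) = 1/(1+x)` (with `x ≠ -1`) or `f₋(x) = 1/(1-x)`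
(with `x ≠ 1`). -/
def ratioSet : Set ℝ :=
  {z | ∃ (n : ℕ) (x : ℕ → ℝ), x 0 = 0 ∧ x n = z ∧
    ∀ i < n, (x i ≠ -1 ∧ x (i + 1) = 1 / (1 + x i)) ∨ (x i ≠ 1 ∧ x (i + 1) = 1 / (1 - x i))}

namespace HC

variable {V : Type*} [Fintype V] {W : Type*} [Fintype W]
open Sum


variable {V : Type*} [Fintype V] {W : Type*} [Fintype W]

lemma map_roundtrip {α β : Type*} (f : α ≃ β) (I : Finset α) :
    (I.map f.toEmbedding).map f.symm.toEmbedding = I := by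
  rw [Finset.map_map]
  have h : f.toEmbedding.trans f.symm.toEmbedding = Function.Embedding.refl α := by
    ext x
    simp only [Function.Embedding.trans_apply, Equiv.coe_toEmbedding,
      Function.Embedding.refl_apply]
    exact Equiv.symm_apply_apply _ _
  rw [h, Finset.map_refl]

lemma map_roundtrip' {α β : Type*} (f : α ≃ β) (J : Finset β) :
    (J.map f.symm.toEmbedding).map f.toEmbedding = J := by
  have := map_roundtrip f.symm J
  rwa [Equiv.symm_symm] at this

lemma mem_indep {G : SimpleGraph V} {I : Finset V} :
    I ∈ indepFinsets G ↔ ∀ u ∈ I, ∀ w ∈ I, ¬ G.Adj u w := by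
  simp [indepFinsets]

lemma hcZ_split (G : SimpleGraph V) (v : V) (lam : ℝ) :
    hcZ G lam = hcZin G v lam + hcZout G v lam := by
  rw [hcZin, hcZout, Finset.sum_filter_add_sum_filter_not]; rfl

section iso
variable {G : SimpleGraph V} {G' : SimpleGraph W}

lemma indep_map (e : G ≃g G') (I : Finset V) :
    I.map e.toEquiv.toEmbedding ∈ indepFinsets G' ↔ I ∈ indepFinsets G := by
  simp only [mem_indep, Finset.mem_map, Equiv.coe_toEmbedding]
  constructor
  · intro h u hu w hw hadj
    exact h _ ⟨u, hu, rfl⟩ _ ⟨w, hw, rfl⟩ (e.map_adj_iff.mpr hadj)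
  · rintro h _ ⟨u, hu, rfl⟩ _ ⟨w, hw, rfl⟩ hadj
    exact h u hu w hw (e.map_adj_iff.mp hadj)

lemma hcZ_iso (e : G ≃g G') (lam : ℝ) : hcZ G' lam = hcZ G lam := by
  refine (Finset.sum_nbij' (fun I => I.map e.toEquiv.toEmbedding)
    (fun J => J.map e.toEquiv.symm.toEmbedding) ?_ ?_ ?_ ?_ ?_).symm
  · intro I hI; rwa [indep_map]
  · intro J hJ
    have h2 := map_roundtrip' e.toEquiv J
    have := (indep_map e (J.map e.toEquiv.symm.toEmbedding)).mp (by rwa [h2])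
    exact this
  · intro I _; exact map_roundtrip _ _
  · intro J _; exact map_roundtrip' _ _
  · intro I _; rw [Finset.card_map]

lemma hcZin_iso (e : G ≃g G') (v : V) (lam : ℝ) : hcZin G' (e v) lam = hcZin G v lam := by
  refine (Finset.sum_nbij' (fun I => I.map e.toEquiv.toEmbedding)
    (fun J => J.map e.toEquiv.symm.toEmbedding) ?_ ?_ ?_ ?_ ?_).symm
  · intro I hI
    simp only [Finset.mem_filter] at hI ⊢
    refine ⟨(indep_map e I).mpr hI.1, ?_⟩
    simp only [Finset.mem_map, Equiv.coe_toEmbedding]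
    exact ⟨v, hI.2, rfl⟩
  · intro J hJ
    simp only [Finset.mem_filter] at hJ ⊢
    constructor
    · have h2 : (J.map e.toEquiv.symm.toEmbedding).map e.toEquiv.toEmbedding = J := by
        ext x; simp
      exact (indep_map e _).mp (by rw [h2]; exact hJ.1)
    · exact Finset.mem_map.mpr ⟨e v, hJ.2, Equiv.symm_apply_apply _ _⟩
  · intro I _; exact map_roundtrip _ _
  · intro J _; exact map_roundtrip' _ _
  · intro I _; rw [Finset.card_map]

lemma hcZout_iso (e : G ≃g G') (v : V) (lam : ℝ) : hcZout G' (e v) lam = hcZout G v lam := by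
  have h1 := hcZ_split G v lam
  have h2 := hcZ_split G' (e v) lam
  have h3 := hcZ_iso e lam
  have h4 := hcZin_iso e v lam
  linarith

lemma degree_iso (e : G ≃g G') (v : V) : G'.degree (e v) = G.degree v := by
  have h : G'.neighborFinset (e v) = (G.neighborFinset v).map e.toEquiv.toEmbedding := by
    ext x
    simp only [SimpleGraph.mem_neighborFinset, Finset.mem_map, Equiv.coe_toEmbedding]
    constructor
    · intro hx
      refine ⟨e.symm x, ?_, by simp⟩
      have h2 : G'.Adj (e v) (e (e.symm x)) := by simpa using hx
      exact e.map_adj_iff.mp h2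
    · rintro ⟨u, hu, rfl⟩; exact e.map_adj_iff.mpr hu
  rw [← SimpleGraph.card_neighborFinset_eq_degree, ← SimpleGraph.card_neighborFinset_eq_degree,
    h, Finset.card_map]

end iso



/-- Pendant construction: new vertex `none` adjacent exactly to `some n`. -/
def pend (G : SimpleGraph V) (n : V) : SimpleGraph (Option V) where
  Adj x y := match x, y with
    | some u, some w => G.Adj u w
    | some u, none => u = n
    | none, some w => w = n
    | none, none => False
  symm := ⟨by rintro (_ | u) (_ | w) h <;> first | exact h.symm | exact h | exact h.elim⟩
  loopless := ⟨by rintro (_ | u) h <;> first | exact h.elim | exact G.loopless.irrefl _ h⟩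

@[simp] lemma pend_adj_some_some {G : SimpleGraph V} {n u w : V} :
    (pend G n).Adj (some u) (some w) ↔ G.Adj u w := Iff.rfl
@[simp] lemma pend_adj_none_some {G : SimpleGraph V} {n w : V} :
    (pend G n).Adj none (some w) ↔ w = n := Iff.rfl
@[simp] lemma pend_adj_some_none {G : SimpleGraph V} {n u : V} :
    (pend G n).Adj (some u) none ↔ u = n := Iff.rfl
@[simp] lemma pend_adj_none_none {G : SimpleGraph V} {n : V} :
    ¬ (pend G n).Adj none none := fun h => h

lemma pend_indep {G : SimpleGraph V} {n : V} {I : Finset (Option V)} :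
    I ∈ indepFinsets (pend G n) ↔
      I.eraseNone ∈ indepFinsets G ∧ (none ∈ I → n ∉ I.eraseNone) := by
  simp only [mem_indep, Finset.mem_eraseNone]
  constructor
  · intro h
    refine ⟨fun u hu w hw hadj => h _ hu _ hw hadj, fun h0 hn => h _ h0 _ hn rfl⟩
  · rintro ⟨h1, h2⟩ (_ | u) hu (_ | w) hw hadj
    · exact hadj
    · exact h2 hu (hadj ▸ hw)
    · exact h2 hw (hadj ▸ hu)
    · exact h1 _ hu _ hw hadj

lemma pend_degree_none {G : SimpleGraph V} {n : V} : (pend G n).degree none = 1 := by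
  have h : (pend G n).neighborFinset none = {some n} := by
    ext (_ | u) <;> simp [SimpleGraph.mem_neighborFinset]
  rw [← SimpleGraph.card_neighborFinset_eq_degree, h, Finset.card_singleton]

lemma pend_degree_some {G : SimpleGraph V} {n u : V} :
    (pend G n).degree (some u) = G.degree u + (if u = n then 1 else 0) := by
  have h : (pend G n).neighborFinset (some u) =
      (G.neighborFinset u).map Function.Embedding.some ∪ (if u = n then {none} else ∅) := by
    by_cases hu : u = n <;> ext (_ | w) <;>
      simp [SimpleGraph.mem_neighborFinset, hu]
  rw [← SimpleGraph.card_neighborFinset_eq_degree, h, Finset.card_union_of_disjoint, Finset.card_map]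
  · congr 1
    by_cases hu : u = n <;> simp [hu]
  · by_cases hu : u = n <;> simp [hu, Finset.disjoint_left]

lemma pend_colorable {G : SimpleGraph V} {n : V} (h : G.Colorable 2) :
    (pend G n).Colorable 2 := by
  obtain C := h.toColoring (by simp : 2 ≤ Fintype.card (ZMod 2))
  have hc : Fintype.card (ZMod 2) = 2 := by simp
  rw [← hc]
  refine SimpleGraph.Coloring.colorable ⟨fun x => match x with
    | some u => C u
    | none => C n + 1, ?_⟩
  rintro (_ | u) (_ | w) hadj <;> simp only at *
  · exact hadj.elim
  · subst hadj; intro hcon; exact one_ne_zero (by linear_combination hcon)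
  · subst hadj; intro hcon; exact one_ne_zero (by linear_combination -hcon)
  · exact C.valid hadj

lemma pend_hcZout_none (G : SimpleGraph V) (n : V) (lam : ℝ) :
    hcZout (pend G n) none lam = hcZ G lam := by
  rw [hcZout, hcZ]
  refine Finset.sum_nbij' (fun I => I.eraseNone) (fun J => J.map Function.Embedding.some)
    ?_ ?_ ?_ ?_ ?_
  · intro I hI
    simp only [Finset.mem_filter] at hI
    exact ((pend_indep).mp hI.1).1
  · intro J hJ
    simp only [Finset.mem_filter]
    constructor
    · rw [pend_indep, Finset.eraseNone_map_some]
      exact ⟨hJ, fun h0 => by simp at h0⟩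
    · simp
  · intro I hI
    simp only [Finset.mem_filter] at hI
    rw [Finset.map_some_eraseNone, Finset.erase_eq_of_notMem hI.2]
  · intro J _
    exact Finset.eraseNone_map_some J
  · intro I hI
    simp only [Finset.mem_filter] at hI
    conv_lhs => rw [← Finset.erase_eq_of_notMem hI.2, ← Finset.map_some_eraseNone I]
    rw [Finset.card_map]

lemma pend_hcZin_none (G : SimpleGraph V) (n : V) (lam : ℝ) :
    hcZin (pend G n) none lam = lam * hcZout G n lam := by
  rw [hcZin, hcZout, Finset.mul_sum]
  refine Finset.sum_nbij' (fun I => I.eraseNone) (fun J => Finset.insertNone J) ?_ ?_ ?_ ?_ ?_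
  · intro I hI
    simp only [Finset.mem_filter] at hI ⊢
    obtain ⟨h1, h2⟩ := (pend_indep).mp hI.1
    exact ⟨h1, h2 hI.2⟩
  · intro J hJ
    simp only [Finset.mem_filter] at hJ ⊢
    refine ⟨?_, Finset.none_mem_insertNone⟩
    rw [pend_indep, Finset.eraseNone_insertNone]
    exact ⟨hJ.1, fun _ => hJ.2⟩
  · intro I hI
    simp only [Finset.mem_filter] at hI
    rw [Finset.insertNone_eraseNone, Finset.insert_eq_of_mem hI.2]
  · intro J _
    exact Finset.eraseNone_insertNone J
  · intro I hI
    simp only [Finset.mem_filter] at hI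
    have : I.card = I.eraseNone.card + 1 := by
      rw [← Finset.card_insertNone, Finset.insertNone_eraseNone, Finset.insert_eq_of_mem hI.2]
    rw [this, pow_succ]
    ring


open Sum

/-- Two graphs joined through a new vertex `none`, adjacent to `inl a` and `inr b`. -/
def link (A : SimpleGraph V) (B : SimpleGraph W) (a : V) (b : W) :
    SimpleGraph (Option (V ⊕ W)) where
  Adj x y := match x, y with
    | some (inl u), some (inl w) => A.Adj u w
    | some (inr u), some (inr w) => B.Adj u w
    | none, some (inl u) => u = a
    | some (inl u), none => u = a
    | none, some (inr w) => w = b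
    | some (inr w), none => w = b
    | _, _ => False
  symm := ⟨by
    rintro (_ | (u | u)) (_ | (w | w)) h <;>
      first | exact h.symm | exact h | exact h.elim⟩
  loopless := ⟨by
    rintro (_ | (u | u)) h <;>
      first | exact h.elim | exact A.loopless.irrefl _ h | exact B.loopless.irrefl _ h⟩

variable {A : SimpleGraph V} {B : SimpleGraph W} {a : V} {b : W}

@[simp] lemma link_adj_ll {u w : V} : (link A B a b).Adj (some (inl u)) (some (inl w)) ↔ A.Adj u w := Iff.rfl
@[simp] lemma link_adj_rr {u w : W} : (link A B a b).Adj (some (inr u)) (some (inr w)) ↔ B.Adj u w := Iff.rfl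
@[simp] lemma link_adj_lr {u : V} {w : W} : ¬ (link A B a b).Adj (some (inl u)) (some (inr w)) := fun h => h
@[simp] lemma link_adj_rl {u : W} {w : V} : ¬ (link A B a b).Adj (some (inr u)) (some (inl w)) := fun h => h
@[simp] lemma link_adj_nl {w : V} : (link A B a b).Adj none (some (inl w)) ↔ w = a := Iff.rfl
@[simp] lemma link_adj_nr {w : W} : (link A B a b).Adj none (some (inr w)) ↔ w = b := Iff.rfl
@[simp] lemma link_adj_ln {u : V} : (link A B a b).Adj (some (inl u)) none ↔ u = a := Iff.rfl
@[simp] lemma link_adj_rn {u : W} : (link A B a b).Adj (some (inr u)) none ↔ u = b := Iff.rfl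
@[simp] lemma link_adj_nn : ¬ (link A B a b).Adj none none := fun h => h

lemma link_indep {I : Finset (Option (V ⊕ W))} :
    I ∈ indepFinsets (link A B a b) ↔
      I.eraseNone.toLeft ∈ indepFinsets A ∧ I.eraseNone.toRight ∈ indepFinsets B ∧
      (none ∈ I → a ∉ I.eraseNone.toLeft ∧ b ∉ I.eraseNone.toRight) := by
  simp only [mem_indep, Finset.mem_toLeft, Finset.mem_toRight, Finset.mem_eraseNone]
  constructor
  · intro h
    refine ⟨fun u hu w hw hadj => h _ hu _ hw hadj,
      fun u hu w hw hadj => h _ hu _ hw hadj,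
      fun h0 => ⟨fun ha => h _ h0 _ ha rfl, fun hb => h _ h0 _ hb rfl⟩⟩
  · rintro ⟨h1, h2, h3⟩ (_ | (u | u)) hu (_ | (w | w)) hw hadj
    · exact hadj
    · exact (h3 hu).1 (hadj ▸ hw)
    · exact (h3 hu).2 (hadj ▸ hw)
    · exact (h3 hw).1 (hadj ▸ hu)
    · exact h1 _ hu _ hw hadj
    · exact hadj
    · exact (h3 hw).2 (hadj ▸ hu)
    · exact hadj
    · exact h2 _ hu _ hw hadj

lemma link_degree_none : (link A B a b).degree none = 2 := by
  have h : (link A B a b).neighborFinset none = {some (inl a), some (inr b)} := by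
    ext (_ | (u | u)) <;> simp [SimpleGraph.mem_neighborFinset]
  rw [← SimpleGraph.card_neighborFinset_eq_degree, h]
  rw [Finset.card_insert_of_notMem (by simp), Finset.card_singleton]

lemma link_degree_some_inl (u : V) :
    (link A B a b).degree (some (inl u)) = A.degree u + (if u = a then 1 else 0) := by
  have h : (link A B a b).neighborFinset (some (inl u)) =
      (A.neighborFinset u).map
        (Function.Embedding.inl.trans Function.Embedding.some)
      ∪ (if u = a then {none} else ∅) := by
    by_cases hu : u = a <;> ext (_ | (w | w)) <;>
      simp [SimpleGraph.mem_neighborFinset, hu]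
  rw [← SimpleGraph.card_neighborFinset_eq_degree, h,
    Finset.card_union_of_disjoint, Finset.card_map]
  · congr 1; by_cases hu : u = a <;> simp [hu]
  · by_cases hu : u = a <;> simp [hu, Finset.disjoint_left]

lemma link_degree_some_inr (u : W) :
    (link A B a b).degree (some (inr u)) = B.degree u + (if u = b then 1 else 0) := by
  have h : (link A B a b).neighborFinset (some (inr u)) =
      (B.neighborFinset u).map
        (Function.Embedding.inr.trans Function.Embedding.some)
      ∪ (if u = b then {none} else ∅) := by
    by_cases hu : u = b <;> ext (_ | (w | w)) <;>
      simp [SimpleGraph.mem_neighborFinset, hu]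
  rw [← SimpleGraph.card_neighborFinset_eq_degree, h,
    Finset.card_union_of_disjoint, Finset.card_map]
  · congr 1; by_cases hu : u = b <;> simp [hu]
  · by_cases hu : u = b <;> simp [hu, Finset.disjoint_left]

lemma link_colorable (hA : A.Colorable 2) (hB : B.Colorable 2) :
    (link A B a b).Colorable 2 := by
  obtain CA := hA.toColoring (by simp : 2 ≤ Fintype.card (ZMod 2))
  obtain CB := hB.toColoring (by simp : 2 ≤ Fintype.card (ZMod 2))
  have hc : Fintype.card (ZMod 2) = 2 := by simp
  rw [← hc]
  refine SimpleGraph.Coloring.colorable ⟨fun x => match x with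
    | some (inl u) => CA u
    | some (inr u) => CB u + (CA a - CB b)
    | none => CA a + 1, ?_⟩
  rintro (_ | (u | u)) (_ | (w | w)) hadj <;> simp only at *
  · exact hadj.elim
  · subst hadj
    intro hcon; exact one_ne_zero (by linear_combination hcon)
  · subst hadj
    intro hcon; exact one_ne_zero (by linear_combination hcon)
  · subst hadj
    intro hcon; exact one_ne_zero (by linear_combination -hcon)
  · exact CA.valid hadj
  · exact hadj.elim
  · subst hadj
    intro hcon; exact one_ne_zero (by linear_combination -hcon)
  · exact hadj.elim
  · intro hcon
    exact CB.valid hadj (by linear_combination hcon)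

lemma prod_expand (s : Finset (Finset V)) (t : Finset (Finset W)) (lam : ℝ) :
    (∑ I ∈ s, lam ^ I.card) * (∑ J ∈ t, lam ^ J.card)
      = ∑ p ∈ s ×ˢ t, lam ^ (p.1.card + p.2.card) := by
  rw [Finset.sum_mul_sum, Finset.sum_product]
  simp [pow_add]

lemma link_hcZout_none (lam : ℝ) :
    hcZout (link A B a b) none lam = hcZ A lam * hcZ B lam := by
  rw [hcZout, hcZ, hcZ, prod_expand]
  refine Finset.sum_nbij' (fun I => (I.eraseNone.toLeft, I.eraseNone.toRight))
    (fun p => (p.1.disjSum p.2).map Function.Embedding.some) ?_ ?_ ?_ ?_ ?_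
  · intro I hI
    simp only [Finset.mem_filter] at hI
    obtain ⟨h1, h2, _⟩ := link_indep.mp hI.1
    exact Finset.mem_product.mpr ⟨h1, h2⟩
  · intro p hp
    simp only [Finset.mem_product] at hp
    simp only [Finset.mem_filter]
    constructor
    · rw [link_indep, Finset.eraseNone_map_some, Finset.toLeft_disjSum, Finset.toRight_disjSum]
      exact ⟨hp.1, hp.2, fun h0 => by simp at h0⟩
    · simp
  · intro I hI
    simp only [Finset.mem_filter] at hI
    dsimp only
    rw [Finset.toLeft_disjSum_toRight, Finset.map_some_eraseNone,
      Finset.erase_eq_of_notMem hI.2]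
  · intro p _
    rw [Finset.eraseNone_map_some, Finset.toLeft_disjSum, Finset.toRight_disjSum]
  · intro I hI
    simp only [Finset.mem_filter] at hI
    dsimp only
    have h1 : I.card = I.eraseNone.card := by
      conv_lhs => rw [← Finset.erase_eq_of_notMem hI.2, ← Finset.map_some_eraseNone I]
      rw [Finset.card_map]
    rw [h1, ← Finset.card_toLeft_add_card_toRight]

lemma link_hcZin_none (lam : ℝ) :
    hcZin (link A B a b) none lam = lam * (hcZout A a lam * hcZout B b lam) := by
  rw [hcZin, hcZout, hcZout, prod_expand, Finset.mul_sum]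
  refine Finset.sum_nbij' (fun I => (I.eraseNone.toLeft, I.eraseNone.toRight))
    (fun p => Finset.insertNone (p.1.disjSum p.2)) ?_ ?_ ?_ ?_ ?_
  · intro I hI
    simp only [Finset.mem_filter] at hI
    obtain ⟨h1, h2, h3⟩ := link_indep.mp hI.1
    obtain ⟨ha, hb⟩ := h3 hI.2
    refine Finset.mem_product.mpr ⟨Finset.mem_filter.mpr ⟨h1, ha⟩, Finset.mem_filter.mpr ⟨h2, hb⟩⟩
  · intro p hp
    simp only [Finset.mem_product, Finset.mem_filter] at hp
    simp only [Finset.mem_filter]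
    refine ⟨?_, Finset.none_mem_insertNone⟩
    rw [link_indep, Finset.eraseNone_insertNone, Finset.toLeft_disjSum, Finset.toRight_disjSum]
    exact ⟨hp.1.1, hp.2.1, fun _ => ⟨hp.1.2, hp.2.2⟩⟩
  · intro I hI
    simp only [Finset.mem_filter] at hI
    dsimp only
    rw [Finset.toLeft_disjSum_toRight, Finset.insertNone_eraseNone,
      Finset.insert_eq_of_mem hI.2]
  · intro p _
    rw [Finset.eraseNone_insertNone, Finset.toLeft_disjSum, Finset.toRight_disjSum]
  · intro I hI
    simp only [Finset.mem_filter] at hI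
    dsimp only
    have h1 : I.card = I.eraseNone.card + 1 := by
      rw [← Finset.card_insertNone, Finset.insertNone_eraseNone, Finset.insert_eq_of_mem hI.2]
    rw [h1, ← Finset.card_toLeft_add_card_toRight, pow_succ]
    ring



/-- Deletion of a vertex. -/
def del (G : SimpleGraph V) (v : V) : SimpleGraph {u : V // u ≠ v} :=
  SimpleGraph.comap Subtype.val G

@[simp] lemma del_adj {G : SimpleGraph V} {v : V} {x y : {u : V // u ≠ v}} :
    (del G v).Adj x y ↔ G.Adj x.1 y.1 := Iff.rfl

lemma del_colorable {G : SimpleGraph V} {v : V} (h : G.Colorable 2) :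
    (del G v).Colorable 2 := by
  obtain ⟨C⟩ := h
  exact ⟨⟨fun u => C u.1, fun hadj => C.valid hadj⟩⟩

lemma del_degree_le {G : SimpleGraph V} {v : V} (x : {u : V // u ≠ v}) :
    (del G v).degree x ≤ G.degree x.1 := by
  rw [← SimpleGraph.card_neighborFinset_eq_degree, ← SimpleGraph.card_neighborFinset_eq_degree]
  have h : ((del G v).neighborFinset x).map (Function.Embedding.subtype _)
      ⊆ G.neighborFinset x.1 := by
    intro y hy
    simp only [Finset.mem_map, SimpleGraph.mem_neighborFinset] at hy ⊢
    obtain ⟨z, hz, rfl⟩ := hy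
    exact hz
  calc ((del G v).neighborFinset x).card
      = (((del G v).neighborFinset x).map (Function.Embedding.subtype _)).card :=
        (Finset.card_map _).symm
    _ ≤ _ := Finset.card_le_card h

lemma del_degree_nbr {G : SimpleGraph V} {v : V} (x : {u : V // u ≠ v})
    (hadj : G.Adj x.1 v) : (del G v).degree x + 1 ≤ G.degree x.1 := by
  rw [← SimpleGraph.card_neighborFinset_eq_degree, ← SimpleGraph.card_neighborFinset_eq_degree]
  have h : ((del G v).neighborFinset x).map (Function.Embedding.subtype _)
      ⊆ (G.neighborFinset x.1).erase v := by
    intro y hy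
    simp only [Finset.mem_map, SimpleGraph.mem_neighborFinset] at hy
    obtain ⟨z, hz, rfl⟩ := hy
    exact Finset.mem_erase.mpr ⟨z.2, SimpleGraph.mem_neighborFinset _ _ _ |>.mpr hz⟩
  have h2 : v ∈ G.neighborFinset x.1 := (SimpleGraph.mem_neighborFinset _ _ _).mpr hadj
  have h3 := Finset.card_le_card h
  rw [Finset.card_map, Finset.card_erase_of_mem h2] at h3
  have h4 : 1 ≤ (G.neighborFinset x.1).card := Finset.card_pos.mpr ⟨v, h2⟩
  omega

lemma del_indep {G : SimpleGraph V} {v : V} {J : Finset {u : V // u ≠ v}} :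
    J ∈ indepFinsets (del G v) ↔ J.map (Function.Embedding.subtype _) ∈ indepFinsets G := by
  simp only [mem_indep, Finset.mem_map]
  constructor
  · rintro h _ ⟨x, hx, rfl⟩ _ ⟨y, hy, rfl⟩ hadj
    exact h x hx y hy hadj
  · intro h x hx y hy hadj
    exact h _ ⟨x, hx, rfl⟩ _ ⟨y, hy, rfl⟩ hadj

lemma subtype_map_of_not_mem {v : V} {I : Finset V} (hv : v ∉ I) :
    (I.subtype (· ≠ v)).map (Function.Embedding.subtype _) = I := by
  rw [Finset.subtype_map]
  exact Finset.filter_eq_self.mpr fun x hx => fun hxv => hv (hxv ▸ hx)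

lemma map_subtype_back {p : V → Prop} (J : Finset {u : V // p u}) :
    (J.map (Function.Embedding.subtype p)).subtype p = J := by
  ext x
  simp only [Finset.mem_subtype, Finset.mem_map, Function.Embedding.coe_subtype]
  constructor
  · rintro ⟨y, hy, h⟩
    rwa [Subtype.ext h] at hy
  · intro h
    exact ⟨x, h, rfl⟩

lemma del_hcZ {G : SimpleGraph V} {v : V} (lam : ℝ) :
    hcZ (del G v) lam = hcZout G v lam := by
  rw [hcZ, hcZout]
  refine Finset.sum_nbij' (fun J => J.map (Function.Embedding.subtype _))
    (fun I => I.subtype (· ≠ v)) ?_ ?_ ?_ ?_ ?_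
  · intro J hJ
    simp only [Finset.mem_filter]
    refine ⟨del_indep.mp hJ, ?_⟩
    simp only [Finset.mem_map]
    rintro ⟨x, _, hx⟩
    exact x.2 hx
  · intro I hI
    simp only [Finset.mem_filter] at hI
    rw [del_indep, subtype_map_of_not_mem hI.2]
    exact hI.1
  · intro J _
    convert map_subtype_back J using 2
  · intro I hI
    simp only [Finset.mem_filter] at hI
    exact subtype_map_of_not_mem hI.2
  · intro J _
    rw [Finset.card_map]

lemma del_hcZout_nbr {G : SimpleGraph V} {v n : V} (hn : n ≠ v)
    (hnbr : G.neighborFinset v = {n}) (lam : ℝ) :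
    hcZin G v lam = lam * hcZout (del G v) ⟨n, hn⟩ lam := by
  have hadj : G.Adj v n := by
    rw [← SimpleGraph.mem_neighborFinset, hnbr]; exact Finset.mem_singleton_self n
  rw [hcZin, hcZout, Finset.mul_sum]
  refine Finset.sum_nbij' (fun I => (I.erase v).subtype (· ≠ v))
    (fun J => insert v (J.map (Function.Embedding.subtype _))) ?_ ?_ ?_ ?_ ?_
  · intro I hI
    simp only [Finset.mem_filter] at hI ⊢
    constructor
    · rw [del_indep, subtype_map_of_not_mem (Finset.notMem_erase v I)]
      rw [mem_indep] at hI ⊢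
      intro x hx y hy
      exact hI.1 x (Finset.mem_of_mem_erase hx) y (Finset.mem_of_mem_erase hy)
    · simp only [Finset.mem_subtype]
      intro hmem
      have := Finset.mem_of_mem_erase hmem
      exact (mem_indep.mp hI.1) v hI.2 n this hadj
  · intro J hJ
    simp only [Finset.mem_filter] at hJ ⊢
    refine ⟨?_, Finset.mem_insert_self v _⟩
    have key : ∀ y ∈ J.map (Function.Embedding.subtype (· ≠ v)), ¬ G.Adj v y := by
      intro y hy hadjvy
      obtain ⟨z, hz, rfl⟩ := Finset.mem_map.mp hy
      have hzn : ((Function.Embedding.subtype (· ≠ v)) z : V) = n := by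
        have hmem : ((Function.Embedding.subtype (· ≠ v)) z : V) ∈ G.neighborFinset v :=
          (SimpleGraph.mem_neighborFinset _ _ _).mpr hadjvy
        rw [hnbr] at hmem
        exact Finset.mem_singleton.mp hmem
      apply hJ.2
      have hz2 : z = ⟨n, hn⟩ := Subtype.ext hzn
      rwa [← hz2]
    rw [mem_indep]
    intro x hx y hy hxy
    rcases Finset.mem_insert.mp hx with hxv | hx' <;>
      rcases Finset.mem_insert.mp hy with hyv | hy'
    · rw [hxv, hyv] at hxy
      exact G.loopless.irrefl v hxy
    · exact key y hy' (by rwa [hxv] at hxy)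
    · exact key x hx' (by rw [hyv] at hxy; exact hxy.symm)
    · obtain ⟨z1, hz1, rfl⟩ := Finset.mem_map.mp hx'
      obtain ⟨z2, hz2, rfl⟩ := Finset.mem_map.mp hy'
      exact mem_indep.mp hJ.1 z1 hz1 z2 hz2 hxy
  · intro I hI
    simp only [Finset.mem_filter] at hI
    rw [subtype_map_of_not_mem (Finset.notMem_erase v I), Finset.insert_erase hI.2]
  · intro J hJ
    simp only [Finset.mem_filter] at hJ
    have hv : v ∉ J.map (Function.Embedding.subtype _) := by
      simp only [Finset.mem_map]
      rintro ⟨x, _, hx⟩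
      exact x.2 hx
    rw [Finset.erase_insert hv]
    convert map_subtype_back J using 2
  · intro I hI
    simp only [Finset.mem_filter] at hI
    have h1 : ((I.erase v).subtype (· ≠ v)).card = (I.erase v).card := by
      rw [← Finset.card_map (Function.Embedding.subtype _),
        subtype_map_of_not_mem (Finset.notMem_erase v I)]
    have h2 : (I.erase v).card + 1 = I.card := Finset.card_erase_add_one hI.2
    rw [h1, ← h2, pow_succ]
    ring


section PreAlgebra

variable {Δ : ℕ} {lam : ℝ}

/-- A graph on `Fin k` with a distinguished vertex of degree at most `Δ - 1`, realizing the
projective pair `(P, Q) ~ (Z^out at the vertex, Z)` up to a nonzero scalar. -/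
def Pre (Δ : ℕ) (lam P Q : ℝ) : Prop :=
  ∃ (k : ℕ) (G : SimpleGraph (Fin k)) (n : Fin k),
    G.Colorable 2 ∧ (∀ u, G.degree u ≤ Δ) ∧ G.degree n + 1 ≤ Δ ∧
    ∃ t : ℝ, t ≠ 0 ∧ hcZout G n lam = t * P ∧ hcZ G lam = t * Q

lemma pre_of_graph {P Q : ℝ} (G : SimpleGraph V) (n : V)
    (hcol : G.Colorable 2) (hdeg : ∀ u, G.degree u ≤ Δ) (hn : G.degree n + 1 ≤ Δ)
    (t : ℝ) (ht : t ≠ 0) (h1 : hcZout G n lam = t * P) (h2 : hcZ G lam = t * Q) :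
    Pre Δ lam P Q := by
  set e0 := Fintype.equivFin V with he0
  set G' := G.map e0.toEmbedding with hG'
  set e : G ≃g G' := SimpleGraph.Iso.map e0 G with he
  refine ⟨Fintype.card V, G', e n, ?_, ?_, ?_, t, ht, ?_, ?_⟩
  · exact SimpleGraph.Colorable.of_hom e.symm.toHom hcol
  · intro u
    have hu : e (e.symm u) = u := e.apply_symm_apply u
    rw [← hu, degree_iso]
    exact hdeg _
  · rw [degree_iso]
    exact hn
  · rw [hcZout_iso]
    exact h1
  · rw [hcZ_iso e]
    exact h2

lemma Pre.scale {P Q : ℝ} (h : Pre Δ lam P Q) {c : ℝ} (hc : c ≠ 0) :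
    Pre Δ lam (c * P) (c * Q) := by
  obtain ⟨k, G, n, h1, h2, h3, t, ht, e1, e2⟩ := h
  refine ⟨k, G, n, h1, h2, h3, t * c⁻¹, mul_ne_zero ht (inv_ne_zero hc), ?_, ?_⟩
  · rw [e1]; field_simp
  · rw [e2]; field_simp

lemma Pre.congr {P Q P' Q' : ℝ} (h : Pre Δ lam P Q) (hP : P = P') (hQ : Q = Q') :
    Pre Δ lam P' Q' := hP ▸ hQ ▸ h

lemma Pre.combine {P₁ Q₁ P₂ Q₂ : ℝ} (hΔ : 3 ≤ Δ)
    (h1 : Pre Δ lam P₁ Q₁) (h2 : Pre Δ lam P₂ Q₂) :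
    Pre Δ lam (Q₁ * Q₂) (Q₁ * Q₂ + lam * (P₁ * P₂)) := by
  obtain ⟨k₁, G₁, n₁, c₁, d₁, s₁, t₁, ht₁, z₁, w₁⟩ := h1
  obtain ⟨k₂, G₂, n₂, c₂, d₂, s₂, t₂, ht₂, z₂, w₂⟩ := h2
  refine pre_of_graph (link G₁ G₂ n₁ n₂) none (link_colorable c₁ c₂) ?_
    (by rw [link_degree_none]; omega) (t₁ * t₂) (mul_ne_zero ht₁ ht₂) ?_ ?_
  · rintro (_ | (u | u))
    · rw [link_degree_none]; omega
    · rw [link_degree_some_inl]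
      split_ifs with h
      · subst h; omega
      · have := d₁ u; omega
    · rw [link_degree_some_inr]
      split_ifs with h
      · subst h; omega
      · have := d₂ u; omega
  · rw [link_hcZout_none, w₁, w₂]; ring
  · rw [hcZ_split (link G₁ G₂ n₁ n₂) none lam, link_hcZin_none, link_hcZout_none,
      w₁, w₂, z₁, z₂]
    ring

/-- The one-vertex graph contributes the pair `(1, 1 + λ)`. -/
lemma unit_pre (hΔ : 3 ≤ Δ) : Pre Δ lam 1 (1 + lam) := by
  have hindep : indepFinsets (⊥ : SimpleGraph (Fin 1)) = Finset.univ := by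
    ext I; simp [mem_indep]
  have huniv : (Finset.univ : Finset (Finset (Fin 1))) = {∅, {0}} := by decide
  have key : ∀ (u : Fin 1) (inst : Fintype ((⊥ : SimpleGraph (Fin 1)).neighborSet u)),
      @SimpleGraph.degree _ ⊥ u inst = 0 := by
    intro u inst
    rw [← SimpleGraph.card_neighborFinset_eq_degree, Finset.card_eq_zero]
    ext x
    simp [SimpleGraph.mem_neighborFinset]
  refine ⟨1, ⊥, 0, ⟨⟨fun _ => 0, fun h => (by simpa using h)⟩⟩, ?_, ?_, 1, one_ne_zero, ?_, ?_⟩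
  · intro u
    rw [key u _]
    omega
  · rw [key 0 _]
    omega
  · rw [hcZout, hindep, Finset.sum_filter, huniv, Finset.sum_insert (by decide),
      Finset.sum_singleton]
    simp
  · rw [hcZ, hindep, huniv, Finset.sum_insert (by decide), Finset.sum_singleton]
    simp

/-- A degree-one vertex implementing the ratio `s` yields, after deleting it,
the pair `(s, λ)` at its neighbor. -/
lemma gadget_pre {W : Type*} [Fintype W] (hΔ : 3 ≤ Δ) (hlam : lam ≠ 0)
    (G : SimpleGraph W) (v : W) (hcol : G.Colorable 2) (hdeg : ∀ u, G.degree u ≤ Δ)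
    (hv : G.degree v = 1) (hZ : hcZout G v lam ≠ 0) {s : ℝ}
    (hs : hcZin G v lam / hcZout G v lam = s) :
    Pre Δ lam s lam := by
  obtain ⟨n, hnbr⟩ := Finset.card_eq_one.mp (by rw [← hv]; rfl :
    (G.neighborFinset v).card = 1)
  have hadjvn : G.Adj v n := by
    rw [← SimpleGraph.mem_neighborFinset, hnbr]; exact Finset.mem_singleton_self n
  have hn : n ≠ v := hadjvn.ne'
  have hin : hcZin G v lam = s * hcZout G v lam := by
    field_simp at hs
    linarith [hs]
  refine pre_of_graph (del G v) ⟨n, hn⟩ (del_colorable hcol) ?_ ?_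
    (hcZout G v lam / lam) (div_ne_zero hZ hlam) ?_ ?_
  · intro u
    exact le_trans (del_degree_le u) (hdeg u.1)
  · exact le_trans (del_degree_nbr ⟨n, hn⟩ hadjvn.symm) (hdeg n)
  · have h := del_hcZout_nbr hn hnbr (G := G) lam
    rw [hin] at h
    field_simp at h ⊢
    linarith [h]
  · rw [del_hcZ]
    field_simp

end PreAlgebra

end HC

/-- Let `Δ ≥ 3` and `λ < 0`. Suppose there are finite bipartite simple graphs `G₋, G₊` of
maximum degree at most `Δ` with degree-one vertices `v₋, v₊` implementing the activities
`-1` and `+1` respectively. Then for every `z ∈ S` there is a finite bipartite simple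
graph `G` of maximum degree at most `Δ` with a degree-one vertex `v` such that
`Z^{out}_{G,v}(λ) ≠ 0` and `Z^{in}_{G,v}(λ)/Z^{out}_{G,v}(λ) = λz`. -/
theorem implements_lambda_S (Δ : ℕ) (hΔ : 3 ≤ Δ) (lam : ℝ) (hlam : lam < 0)
    {Wm : Type} [Fintype Wm] (Gm : SimpleGraph Wm) (vm : Wm)
    {Wp : Type} [Fintype Wp] (Gp : SimpleGraph Wp) (vp : Wp)
    (hGmbip : Gm.Colorable 2) (hGmdeg : ∀ u : Wm, Gm.degree u ≤ Δ) (hvm : Gm.degree vm = 1)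
    (hZm : hcZout Gm vm lam ≠ 0) (hm : hcZin Gm vm lam / hcZout Gm vm lam = -1)
    (hGpbip : Gp.Colorable 2) (hGpdeg : ∀ u : Wp, Gp.degree u ≤ Δ) (hvp : Gp.degree vp = 1)
    (hZp : hcZout Gp vp lam ≠ 0) (hp : hcZin Gp vp lam / hcZout Gp vp lam = 1)
    (z : ℝ) (hz : z ∈ ratioSet) :
    ∃ (k : ℕ) (G : SimpleGraph (Fin k)) (v : Fin k),
      G.Colorable 2 ∧ (∀ u : Fin k, G.degree u ≤ Δ) ∧ G.degree v = 1 ∧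
      hcZout G v lam ≠ 0 ∧ hcZin G v lam / hcZout G v lam = lam * z := by
  have hlam0 : lam ≠ 0 := ne_of_lt hlam
  have base0 : HC.Pre Δ lam 1 0 := by
    refine HC.pre_of_graph Gm vm hGmbip hGmdeg (by rw [hvm]; omega)
      (hcZout Gm vm lam) hZm (mul_one _).symm ?_
    rw [HC.hcZ_split Gm vm lam]
    rw [div_eq_iff hZm] at hm
    linarith
  have unit1 : HC.Pre Δ lam 1 (1 + lam) := HC.unit_pre hΔ
  have gm : HC.Pre Δ lam (-1) lam := HC.gadget_pre hΔ hlam0 Gm vm hGmbip hGmdeg hvm hZm hm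
  have gp : HC.Pre Δ lam 1 lam := HC.gadget_pre hΔ hlam0 Gp vp hGpbip hGpdeg hvp hZp hp
  have good0 : HC.Pre Δ lam 0 1 := by
    have h := HC.Pre.combine hΔ base0 unit1
    have h2 := h.congr (by ring : (0 : ℝ) * (1 + lam) = 0)
      (by ring : (0 : ℝ) * (1 + lam) + lam * (1 * 1) = lam)
    have h3 := h2.scale (c := lam⁻¹) (inv_ne_zero hlam0)
    exact h3.congr (by ring) (by field_simp)
  obtain ⟨nn, x, hx0, hxn, hstep⟩ := hz
  have good : ∀ i, i ≤ nn → HC.Pre Δ lam (x i) 1 := by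
    intro i
    induction i with
    | zero => intro _; rw [hx0]; exact good0
    | succ i ih =>
      intro hle
      have hi : i < nn := Nat.lt_of_succ_le hle
      have hgi := ih (le_of_lt hi)
      rcases hstep i hi with ⟨hne, hstep'⟩ | ⟨hne, hstep'⟩
      · have hc := HC.Pre.combine hΔ hgi gp
        have hden : (1 : ℝ) + x i ≠ 0 := fun h => hne (by linarith)
        have h2 := hc.scale (c := (lam * (1 + x i))⁻¹)
          (inv_ne_zero (mul_ne_zero hlam0 hden))
        refine h2.congr ?_ ?_
        · rw [hstep']; field_simp
        · field_simp
      · have hc := HC.Pre.combine hΔ hgi gm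
        have hden : (1 : ℝ) - x i ≠ 0 := fun h => hne (by linarith)
        have h2 := hc.scale (c := (lam * (1 - x i))⁻¹)
          (inv_ne_zero (mul_ne_zero hlam0 hden))
        refine h2.congr ?_ ?_
        · rw [hstep']; field_simp
        · field_simp; ring
  obtain ⟨k, K, n, hcol, hdeg, hslack, t, ht, hZout, hZK⟩ :
      HC.Pre Δ lam z 1 := hxn ▸ good nn le_rfl
  set P := HC.pend K n with hP
  have hfcol : P.Colorable 2 := HC.pend_colorable hcol
  have hfdeg : ∀ u, P.degree u ≤ Δ := by
    rintro (_ | u)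
    · rw [hP, HC.pend_degree_none]; omega
    · rw [hP, HC.pend_degree_some]
      split_ifs with h
      · subst h; omega
      · have := hdeg u; omega
  have hf1 : P.degree none = 1 := HC.pend_degree_none
  have hfout : hcZout P none lam = t := by
    rw [hP, HC.pend_hcZout_none, hZK, mul_one]
  have hfin : hcZin P none lam = lam * (t * z) := by
    rw [hP, HC.pend_hcZin_none, hZout]
  set e0 := Fintype.equivFin (Option (Fin k)) with he0
  set P' := P.map e0.toEmbedding with hP'
  set e : P ≃g P' := SimpleGraph.Iso.map e0 P with he
  refine ⟨Fintype.card (Option (Fin k)), P', e none,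
    SimpleGraph.Colorable.of_hom e.symm.toHom hfcol, ?_, ?_, ?_, ?_⟩
  · intro u
    have hu : e (e.symm u) = u := e.apply_symm_apply u
    rw [← hu, HC.degree_iso]
    exact hfdeg _
  · rw [HC.degree_iso]
    exact hf1
  · rw [HC.hcZout_iso, hfout]
    exact ht
  · rw [HC.hcZout_iso, HC.hcZin_iso, hfout, hfin]
    field_simp
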